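/- For any matching model under distributional constraints satisfying heredity, a cutoff stable matching always exists. -/

import Mathlib

open Finset

/-- An instance of the two-sided matching problem: applicants `A` with strict preference
lists over acceptable projects, projects `P` with strict preference lists over
acceptable applicants (best first), and capacities. -/
structure MatchInst (A P : Type) where
  prefA : A → List P
  prefP : P → List A
  cap : P → ℕ

variable {A P : Type} [Fintype A] [Fintype P] [DecidableEq A] [DecidableEq P]

/-- number of applicants matched to project `p` -/
def mcount (M : A → Option P) (p : P) : ℕ := (univ.filter fun a => M a = some p).card

/-- counts after adding one extra applicant to project `p` (the matching `M ∪ {(a,p)}`) -/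
def addCount (M : A → Option P) (p : P) : P → ℕ :=
  fun q => mcount M q + if q = p then 1 else 0

/-- the matching `(M ∪ {(a,p)}) \ {(a, M(a))}` -/
def swap (M : A → Option P) (a : A) (p : P) : A → Option P := Function.update M a (some p)

/-- a feasibility function on (anonymous) distributions of applicants over projects,
satisfying the heredity property -/
def Heredity (f : (P → ℕ) → Prop) : Prop :=
  f (fun _ => 0) ∧ ∀ v w : P → ℕ, (∀ p, w p ≤ v p) → f v → f w

namespace MatchInst

variable (I : MatchInst A P)

def accA (a : A) (p : P) : Prop := p ∈ I.prefA a
def accP (p : P) (a : A) : Prop := a ∈ I.prefP p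
/-- rank of project `p` in applicant `a`'s list (0-indexed; lower is better) -/
def rkA (a : A) (p : P) : ℕ := (I.prefA a).idxOf p
/-- rank of applicant `a` in project `p`'s list (0-indexed; lower is better) -/
def rkP (p : P) (a : A) : ℕ := (I.prefP p).idxOf a
/-- score of applicant `a` at project `p`: `|A| - k + 1` if `a` is ranked `k`-th, `0` if unranked -/
def score (p : P) (a : A) : ℕ :=
  if a ∈ I.prefP p then Fintype.card A - (I.prefP p).idxOf a else 0

def IsMatching (M : A → Option P) : Prop :=
  (∀ a p, M a = some p → I.accA a p ∧ I.accP p a) ∧ ∀ p, mcount M p ≤ I.cap p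

/-- `a` strictly prefers project `p` to the assignment `o` (being unmatched is worst) -/
def Prefers (a : A) (p : P) (o : Option P) : Prop :=
  I.accA a p ∧ ∀ q, o = some q → I.rkA a p < I.rkA a q

/-- no justified envy -/
def Fair (M : A → Option P) : Prop :=
  ∀ a p, M a ≠ some p → I.Prefers a p (M a) →
    ∀ a', M a' = some p → I.rkP p a' < I.rkP p a

/-- applicant `a` is admissible at project `p` under cutoffs `d` -/
def Adm (d : P → ℕ) (a : A) (p : P) : Prop :=
  I.accA a p ∧ I.accP p a ∧ d p ≤ I.score p a

/-- cutoffs `d` induce the matching `M`: every applicant is matched to her most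
preferred project where she is admissible (and unmatched if there is none) -/
def Induces (d : P → ℕ) (M : A → Option P) : Prop :=
  ∀ a : A,
    (∀ p, M a = some p → I.Adm d a p ∧ ∀ q, I.Adm d a q → q ≠ p → I.rkA a p < I.rkA a q) ∧
    (M a = none → ∀ p, ¬ I.Adm d a p)

def Blocking (M : A → Option P) (a : A) (p : P) : Prop :=
  I.Prefers a p (M a) ∧
    ((mcount M p < I.cap p ∧ I.accP p a) ∨ ∃ a', M a' = some p ∧ I.rkP p a < I.rkP p a')

def StronglyStable (f : (P → ℕ) → Prop) (M : A → Option P) : Prop :=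
  I.IsMatching M ∧ f (mcount M) ∧
    ∀ a p, I.Blocking M a p →
      (∀ a', M a' = some p → I.rkP p a' < I.rkP p a) ∧ ¬ f (mcount (swap M a p))

/-- weak stability in terms of permitted blocking pairs -/
def WeaklyStableBlk (f : (P → ℕ) → Prop) (M : A → Option P) : Prop :=
  I.IsMatching M ∧ f (mcount M) ∧
    ∀ a p, I.Blocking M a p →
      (∀ a', M a' = some p → I.rkP p a' < I.rkP p a) ∧ ¬ f (addCount M p)

def WeaklyNonWasteful (f : (P → ℕ) → Prop) (M : A → Option P) : Prop :=
  f (mcount M) ∧ ∀ a p, M a ≠ some p → I.accP p a → I.Prefers a p (M a) →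
    ¬ f (addCount M p) ∨ I.cap p ≤ mcount M p

/-- weak stability as fairness plus weak non-wastefulness -/
def WeaklyStable (f : (P → ℕ) → Prop) (M : A → Option P) : Prop :=
  I.IsMatching M ∧ I.Fair M ∧ I.WeaklyNonWasteful f M

def CutoffNonWasteful (f : (P → ℕ) → Prop) (M : A → Option P) : Prop :=
  f (mcount M) ∧ ∀ a p, M a ≠ some p → I.accP p a → I.Prefers a p (M a) →
    ¬ f (mcount (swap M a p)) ∨
    (∃ a', M a' ≠ some p ∧ I.accP p a' ∧ I.rkP p a' < I.rkP p a ∧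
      I.Prefers a' p (M a') ∧ ¬ f (mcount (swap M a' p))) ∨
    I.cap p ≤ mcount M p

def CutoffStable (f : (P → ℕ) → Prop) (M : A → Option P) : Prop :=
  I.IsMatching M ∧ I.Fair M ∧ I.CutoffNonWasteful f M

/-- project `p` is unconstrained for `M`: one more applicant can be added to `p` feasibly -/
def Unconstrained (f : (P → ℕ) → Prop) (M : A → Option P) (p : P) : Prop :=
  f (addCount M p)

/-- cutoffs after decreasing the cutoff of `p` by one -/
def decCut (d : P → ℕ) (p : P) : P → ℕ := Function.update d p (d p - 1)

/-- minimal cutoffs: no cutoff can be decreased keeping the induced matching feasible -/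
def MinimalCutoffs (f : (P → ℕ) → Prop) (d : P → ℕ) : Prop :=
  ∀ p, d p = 0 ∨ ∀ M', I.Induces (decCut d p) M' → ¬ f (mcount M')

def StrictlyBetter (a : A) (o o' : Option P) : Prop :=
  ∃ p, o = some p ∧ I.accA a p ∧ ∀ q, o' = some q → I.rkA a p < I.rkA a q

def ParetoDominates (M' M : A → Option P) : Prop :=
  (∀ a, M' a = M a ∨ I.StrictlyBetter a (M' a) (M a)) ∧
    ∃ a, I.StrictlyBetter a (M' a) (M a)

end MatchInst

section Aux

variable (I : MatchInst A P)

/-- the set of projects at which `a` is admissible under cutoffs `d` -/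
def admSet (d : P → ℕ) (a : A) : Finset P :=
  univ.filter fun q => q ∈ I.prefA a ∧ a ∈ I.prefP q ∧ d q ≤ I.score q a

lemma mem_admSet {d : P → ℕ} {a : A} {q : P} :
    q ∈ admSet I d a ↔ I.Adm d a q := by
  simp [admSet, MatchInst.Adm, MatchInst.accA, MatchInst.accP]

/-- the matching induced by cutoffs `d` -/
noncomputable def ind (d : P → ℕ) : A → Option P := fun a =>
  if h : (admSet I d a).Nonempty then
    some (Classical.choose ((admSet I d a).exists_min_image (I.rkA a) h))
  else none

lemma ind_some {d : P → ℕ} {a : A} {p : P} (h : ind I d a = some p) :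
    I.Adm d a p ∧ ∀ q, I.Adm d a q → I.rkA a p ≤ I.rkA a q := by
  unfold ind at h
  split at h
  · rename_i hne
    obtain ⟨hm, hmin⟩ :=
      Classical.choose_spec ((admSet I d a).exists_min_image (I.rkA a) hne)
    have hp := Option.some.inj h
    subst hp
    exact ⟨(mem_admSet I).1 hm, fun q hq => hmin q ((mem_admSet I).2 hq)⟩
  · simp at h

lemma ind_none {d : P → ℕ} {a : A} (h : ind I d a = none) :
    ∀ q, ¬ I.Adm d a q := by
  unfold ind at h
  split at h
  · simp at h
  · rename_i hne
    exact fun q hq => hne ⟨q, (mem_admSet I).2 hq⟩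

lemma ind_strict (hA : ∀ a, (I.prefA a).Nodup) {d : P → ℕ} {a : A} {p q : P}
    (h : ind I d a = some p) (hq : I.Adm d a q) (hne : q ≠ p) :
    I.rkA a p < I.rkA a q := by
  obtain ⟨hp, hmin⟩ := ind_some I h
  refine lt_of_le_of_ne (hmin q hq) fun he => hne ?_
  have h1 : p ∈ I.prefA a := hp.1
  have h2 : q ∈ I.prefA a := hq.1
  have he' : (I.prefA a).idxOf p = (I.prefA a).idxOf q := he
  exact (List.idxOf_inj h2).1 he'.symm

lemma score_le (p : P) (a : A) : I.score p a ≤ Fintype.card A := by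
  unfold MatchInst.score
  split
  · exact Nat.sub_le _ _
  · exact Nat.zero_le _

lemma score_lt (hP : ∀ p, (I.prefP p).Nodup) {p : P} {a b : A}
    (ha : I.accP p a) (hb : I.accP p b) (h : I.score p a < I.score p b) :
    I.rkP p b < I.rkP p a := by
  have ha' : a ∈ I.prefP p := ha
  have hb' : b ∈ I.prefP p := hb
  have h1 := List.idxOf_lt_length_iff.2 ha'
  have h2 := List.idxOf_lt_length_iff.2 hb'
  have h3 := (hP p).length_le_card
  unfold MatchInst.score at h
  rw [if_pos ha', if_pos hb'] at h
  unfold MatchInst.rkP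
  omega

lemma score_inj (hP : ∀ p, (I.prefP p).Nodup) {p : P} {a b : A}
    (ha : I.accP p a) (hb : I.accP p b) (h : I.score p a = I.score p b) :
    a = b := by
  have ha' : a ∈ I.prefP p := ha
  have hb' : b ∈ I.prefP p := hb
  have h1 := List.idxOf_lt_length_iff.2 ha'
  have h2 := List.idxOf_lt_length_iff.2 hb'
  have h3 := (hP p).length_le_card
  unfold MatchInst.score at h
  rw [if_pos ha', if_pos hb'] at h
  exact (List.idxOf_inj ha').1 (by omega)

lemma mcount_swap_le (M : A → Option P) (a : A) (p q : P) :
    mcount (swap M a p) q ≤ addCount M p q := by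
  unfold mcount addCount
  rcases eq_or_ne q p with rfl | h
  · simp only [if_pos rfl]
    have hsub : (univ.filter fun b => swap M a q b = some q) ⊆
        insert a (univ.filter fun b => M b = some q) := by
      intro b hb
      simp only [mem_filter, mem_univ, true_and] at hb
      rcases eq_or_ne b a with rfl | hba
      · exact mem_insert_self _ _
      · simp only [swap, Function.update_of_ne hba] at hb
        exact mem_insert_of_mem (by simp [hb])
    exact le_trans (card_le_card hsub) (card_insert_le _ _)
  · simp only [if_neg h, add_zero]
    apply card_le_card
    intro b hb
    simp only [mem_filter, mem_univ, true_and] at hb ⊢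
    rcases eq_or_ne b a with rfl | hba
    · simp only [swap, Function.update_self] at hb
      exact absurd (Option.some.inj hb) (Ne.symm h)
    · simpa only [swap, Function.update_of_ne hba] using hb

lemma decCut_le (d : P → ℕ) (p q : P) : MatchInst.decCut d p q ≤ d q := by
  unfold MatchInst.decCut
  rcases eq_or_ne q p with rfl | h
  · rw [Function.update_self]; exact Nat.sub_le _ _
  · rw [Function.update_of_ne h]

lemma adm_mono {d : P → ℕ} {p : P} {a : A} {q : P} (h : I.Adm d a q) :
    I.Adm (MatchInst.decCut d p) a q :=
  ⟨h.1, h.2.1, le_trans (decCut_le d p q) h.2.2⟩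

/-- key characterization: decreasing the cutoff of `p` by one either leaves the induced
matching unchanged, or moves exactly one applicant (with score `d p - 1`) to `p`. -/
lemma ind_dec (hA : ∀ a, (I.prefA a).Nodup) (hP : ∀ p, (I.prefP p).Nodup)
    (d : P → ℕ) (p : P) (hd : 1 ≤ d p) :
    ind I (MatchInst.decCut d p) = ind I d ∨
    ∃ a, I.score p a = d p - 1 ∧ I.accA a p ∧ I.accP p a ∧ ind I d a ≠ some p ∧
      I.Prefers a p (ind I d a) ∧ ind I (MatchInst.decCut d p) = swap (ind I d) a p := by
  classical
  set d' := MatchInst.decCut d p with hd'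
  set M := ind I d with hM
  set M' := ind I d' with hM'
  have hrev : ∀ a q, I.Adm d' a q → I.Adm d a q ∨ (q = p ∧ I.score p a = d p - 1) := by
    intro a q h
    rcases eq_or_ne q p with rfl | hne
    · have h3 : d' q ≤ I.score q a := h.2.2
      rw [hd'] at h3
      unfold MatchInst.decCut at h3
      rw [Function.update_self] at h3
      by_cases hc : d q ≤ I.score q a
      · exact Or.inl ⟨h.1, h.2.1, hc⟩
      · exact Or.inr ⟨rfl, by omega⟩
    · refine Or.inl ⟨h.1, h.2.1, ?_⟩
      have h3 : d' q ≤ I.score q a := h.2.2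
      rw [hd'] at h3
      unfold MatchInst.decCut at h3
      rwa [Function.update_of_ne hne] at h3
  have hC : ∀ a, M' a = M a ∨
      (I.score p a = d p - 1 ∧ I.accA a p ∧ I.accP p a ∧ M a ≠ some p ∧
        I.Prefers a p (M a) ∧ M' a = some p) := by
    intro a
    cases hMa' : M' a with
    | none =>
      left
      cases hMa : M a with
      | none => rfl
      | some r => exact absurd (adm_mono I (ind_some I hMa).1) (ind_none I hMa' r)
    | some q =>
      obtain ⟨hq, hmin'⟩ := ind_some I hMa'
      rcases hrev a q hq with hqd | ⟨heqp, hsc⟩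
      · left
        cases hMa : M a with
        | none => exact absurd hqd (ind_none I hMa q)
        | some r =>
          congr 1
          by_contra hne
          have h1 := ind_strict I hA hMa hqd hne
          have h2 := ind_strict I hA hMa' (adm_mono I (ind_some I hMa).1)
            (fun h => hne h.symm)
          omega
      · right
        subst heqp
        have hnp : M a ≠ some q := by
          intro hMp
          have h1 : d q ≤ I.score q a := (ind_some I hMp).1.2.2
          omega
        refine ⟨hsc, hq.1, hq.2.1, hnp, ⟨hq.1, ?_⟩, rfl⟩
        intro r hMr
        have hr := (ind_some I hMr).1
        have hrp : r ≠ q := fun h => hnp (h ▸ hMr)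
        exact ind_strict I hA hMa' (adm_mono I hr) hrp
  by_cases hall : ∀ a, M' a = M a
  · exact Or.inl (funext hall)
  · push_neg at hall
    obtain ⟨a₀, ha₀⟩ := hall
    rcases hC a₀ with h | ⟨hs, hacA, hacP, hnp, hpref, hMa₀⟩
    · exact absurd h ha₀
    refine Or.inr ⟨a₀, hs, hacA, hacP, hnp, hpref, funext fun b => ?_⟩
    rcases eq_or_ne b a₀ with rfl | hb
    · rw [hMa₀]
      simp [swap]
    · simp only [swap, Function.update_of_ne hb]
      rcases hC b with h | ⟨hs', _, hacP', _, _, _⟩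
      · exact h
      · exact absurd (score_inj I hP hacP' hacP (hs'.trans hs.symm)) hb

end Aux

/-- For any matching model under distributional constraints satisfying
heredity, a cutoff stable matching always exists. -/
theorem cutoffStable_exists (I : MatchInst A P) (f : (P → ℕ) → Prop)
    (hA : ∀ a, (I.prefA a).Nodup) (hP : ∀ p, (I.prefP p).Nodup)
    (hf : Heredity f) :
    ∃ M : A → Option P, I.CutoffStable f M := by
  classical
  -- feasibility including capacities
  have hex : ∃ n, ∃ d : P → ℕ, (∑ r, d r) = n ∧
      f (mcount (ind I d)) ∧ ∀ r, mcount (ind I d) r ≤ I.cap r := by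
    refine ⟨∑ _r : P, (Fintype.card A + 1), fun _ => Fintype.card A + 1, rfl, ?_⟩
    have h0 : ∀ a : A, ind I (fun _ => Fintype.card A + 1) a = none := by
      intro a
      have hemp : ¬ (admSet I (fun _ => Fintype.card A + 1) a).Nonempty := by
        rintro ⟨q, hq⟩
        have h1 : (Fintype.card A + 1 : ℕ) ≤ I.score q a := ((mem_admSet I).1 hq).2.2
        have h2 := score_le I q a
        omega
      unfold ind
      exact dif_neg hemp
    have h1 : mcount (ind I (fun _ => Fintype.card A + 1)) = fun _ : P => 0 := by
      funext r
      simp [mcount, h0]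
    rw [h1]
    exact ⟨hf.1, fun r => Nat.zero_le _⟩
  obtain ⟨d, hsum, hfeasf, hfeascap⟩ := Nat.find_spec hex
  set M := ind I d with hMdef
  -- non-admissibility of envious applicants
  have hnotadm : ∀ a q, M a ≠ some q → I.Prefers a q (M a) → ¬ I.Adm d a q := by
    intro a q hne hpf hadm
    cases hMa : M a with
    | none => exact ind_none I hMa q hadm
    | some r =>
      have hrq : q ≠ r := fun h => hne (h ▸ hMa)
      have h1 := ind_strict I hA hMa hadm hrq
      have h2 := hpf.2 r hMa
      omega
  have hscorelt : ∀ a q, M a ≠ some q → I.accP q a → I.Prefers a q (M a) →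
      I.score q a < d q := by
    intro a q hne haccP hpf
    by_contra h
    push_neg at h
    exact hnotadm a q hne hpf ⟨hpf.1, haccP, h⟩
  -- the matching property
  have hmatch : I.IsMatching M := by
    refine ⟨fun a q h => ?_, hfeascap⟩
    have := (ind_some I h).1
    exact ⟨this.1, this.2.1⟩
  -- fairness
  have hfair : I.Fair M := by
    intro a q hne hpf a' hMa'
    have hadm' := (ind_some I hMa').1
    by_cases hmem : a ∈ I.prefP q
    · have hs : I.score q a < d q := hscorelt a q hne hmem hpf
      have hs' : d q ≤ I.score q a' := hadm'.2.2
      exact score_lt I hP hmem hadm'.2.1 (by omega)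
    · have h1 : I.rkP q a = (I.prefP q).length := List.idxOf_eq_length_iff.2 hmem
      have h2 : a' ∈ I.prefP q := hadm'.2.1
      have h3 : I.rkP q a' < (I.prefP q).length := List.idxOf_lt_length_iff.2 h2
      omega
  refine ⟨M, hmatch, hfair, hfeasf, ?_⟩
  intro a q hne haccP hpf
  have hs : I.score q a < d q := hscorelt a q hne haccP hpf
  have hd1 : 1 ≤ d q := by omega
  -- minimality: decreasing the cutoff at `q` yields an infeasible matching
  have hinfeas : ¬ (f (mcount (ind I (MatchInst.decCut d q))) ∧
      ∀ r, mcount (ind I (MatchInst.decCut d q)) r ≤ I.cap r) := by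
    have h1 : (∑ r, MatchInst.decCut d q r) + 1 = ∑ r, d r := by
      unfold MatchInst.decCut
      rw [Finset.sum_update_of_mem (mem_univ q)]
      have h2 : ∑ r, d r = d q + ∑ x ∈ univ \ {q}, d x :=
        Finset.sum_eq_add_sum_sdiff_singleton_of_mem (mem_univ q) d
      omega
    have hlt : (∑ r, MatchInst.decCut d q r) < Nat.find hex := by omega
    intro hgf
    exact Nat.find_min hex hlt ⟨MatchInst.decCut d q, rfl, hgf⟩
  rcases ind_dec I hA hP d q hd1 with heq | ⟨a₀, hs₀, hA₀, hP₀, hnp₀, hpref₀, heq⟩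
  · rw [heq] at hinfeas
    exact absurd ⟨hfeasf, hfeascap⟩ hinfeas
  · rw [heq] at hinfeas
    have hcases : ¬ f (mcount (swap M a₀ q)) ∨ I.cap q ≤ mcount M q := by
      by_contra hcon
      push_neg at hcon
      refine hinfeas ⟨hcon.1, fun r => le_trans (mcount_swap_le M a₀ q r) ?_⟩
      unfold addCount
      rcases eq_or_ne r q with rfl | h
      · have h2 := hcon.2
        have h3 : (if r = r then 1 else 0) = 1 := if_pos rfl
        rw [h3]
        omega
      · simp only [if_neg h, add_zero]
        exact hfeascap r
    rcases eq_or_ne a₀ a with rfl | hne₀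
    · rcases hcases with h | h
      · exact Or.inl h
      · exact Or.inr (Or.inr h)
    · rcases hcases with h | h
      · refine Or.inr (Or.inl ⟨a₀, hnp₀, hP₀, ?_, hpref₀, h⟩)
        have hne' : I.score q a ≠ I.score q a₀ :=
          fun he => hne₀ (score_inj I hP hP₀ haccP he.symm)
        exact score_lt I hP haccP hP₀ (by omega)
      · exact Or.inr (Or.inr h)
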